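/- Let k ≥ 1 and 0 ≤ ℓ ≤ k be integers. Every finite simple graph G with n ≥ ℓ vertices containing no clique of cardinality k + 1 has at most C(k,ℓ)·(n/k)^ℓ cliques of cardinality ℓ; that is, c_ℓ(G) ≤ C(k,ℓ)·(n/k)^ℓ as real numbers, equivalently k^ℓ·c_ℓ(G) ≤ C(k,ℓ)·n^ℓ. -/

import Mathlib

open Finset

namespace ZykovAux

/-- Two-term AM-GM with integer weights: `a^p * b ≤ ((p*a+b)/(p+1))^(p+1)`. -/
lemma amgm (p : ℕ) {a b : ℝ} (ha : 0 ≤ a) (hb : 0 ≤ b) :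
    a ^ p * b ≤ (((p : ℝ) * a + b) / ((p : ℝ) + 1)) ^ (p + 1) := by
  have hp1 : (0:ℝ) < (p:ℝ) + 1 := by positivity
  set w₁ : ℝ := (p : ℝ) / ((p:ℝ)+1) with hw₁
  set w₂ : ℝ := 1 / ((p:ℝ)+1) with hw₂
  have hsum : w₁ + w₂ = 1 := by rw [hw₁, hw₂]; field_simp
  have h := Real.geom_mean_le_arith_mean2_weighted
    (by positivity) (by positivity) ha hb hsum
  have h2 := Real.rpow_le_rpow (by positivity) h (le_of_lt hp1)
  have ea : (a ^ w₁) ^ ((p:ℝ)+1) = a ^ p := by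
    rw [← Real.rpow_mul ha]
    have hx : w₁ * ((p:ℝ)+1) = (p:ℝ) := by rw [hw₁]; field_simp
    rw [hx, Real.rpow_natCast]
  have eb : (b ^ w₂) ^ ((p:ℝ)+1) = b := by
    rw [← Real.rpow_mul hb]
    have hx : w₂ * ((p:ℝ)+1) = 1 := by rw [hw₂]; field_simp
    rw [hx, Real.rpow_one]
  have e1 : (a ^ w₁ * b ^ w₂) ^ ((p:ℝ)+1) = a ^ p * b := by
    rw [Real.mul_rpow (Real.rpow_nonneg ha _) (Real.rpow_nonneg hb _), ea, eb]
  have e2 : (w₁ * a + w₂ * b) ^ ((p:ℝ)+1) = (((p : ℝ) * a + b) / ((p : ℝ) + 1)) ^ (p + 1) := by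
    have hM : w₁ * a + w₂ * b = ((p : ℝ) * a + b) / ((p : ℝ) + 1) := by
      rw [hw₁, hw₂]
      field_simp
    have hcast : ((p:ℝ)+1) = (((p+1:ℕ)):ℝ) := by norm_cast
    rw [hM, hcast, Real.rpow_natCast]
  rw [e1, e2] at h2
  exact h2

/-- The key numerical inequality. -/
lemma key (t r : ℕ) (hrt : r + 1 ≤ t) {d n : ℝ} (hd : 0 ≤ d) (hdn : d ≤ n) :
    ((t:ℝ)+1) ^ (r+2) * ((t.choose (r+2) : ℝ) * d ^ (r+2)
        + (t:ℝ) * (n - d) * (t.choose (r+1) : ℝ) * d ^ (r+1))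
      ≤ (t:ℝ) ^ (r+2) * ((t+1).choose (r+2) : ℝ) * n ^ (r+2) := by
  have hn : (0:ℝ) ≤ n := le_trans hd hdn
  have ht : (1:ℝ) ≤ (t:ℝ) := by exact_mod_cast Nat.one_le_iff_ne_zero.2 (by omega)
  -- the two choose identities
  have I1 : ((r:ℝ)+2) * (t.choose (r+2) : ℝ) = ((t:ℝ) - ((r:ℝ)+1)) * (t.choose (r+1) : ℝ) := by
    have h := Nat.choose_succ_right_eq t (r+1)
    have hc : ((t.choose (r+2) * (r+2) : ℕ) : ℝ) = ((t.choose (r+1) * (t - (r+1)) : ℕ) : ℝ) := by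
      exact_mod_cast congrArg (Nat.cast (R := ℝ)) h
    push_cast [Nat.cast_sub hrt] at hc
    linarith [hc]
  have I2 : ((r:ℝ)+2) * ((t+1).choose (r+2) : ℝ) = ((t:ℝ)+1) * (t.choose (r+1) : ℝ) := by
    have h := Nat.add_one_mul_choose_eq t (r+1)
    have hc : (((t+1) * t.choose (r+1) : ℕ) : ℝ) = (((t+1).choose (r+2) * (r+2) : ℕ) : ℝ) := by
      exact_mod_cast congrArg (Nat.cast (R := ℝ)) h
    push_cast at hc
    linarith [hc]
  -- AM-GM setup
  set a : ℝ := ((t:ℝ)+1) * d with ha'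
  set b : ℝ := ((r:ℝ)+2) * (t:ℝ) * n - ((r:ℝ)+1) * ((t:ℝ)+1) * d with hb'
  have ha : 0 ≤ a := by positivity
  have hb : 0 ≤ b := by
    have h1 : ((r:ℝ)+1) * ((t:ℝ)+1) ≤ ((r:ℝ)+2) * (t:ℝ) := by
      have : (r:ℝ) + 1 ≤ (t:ℝ) := by exact_mod_cast hrt
      nlinarith
    rw [hb']
    nlinarith [mul_le_mul_of_nonneg_left hdn (show (0:ℝ) ≤ ((r:ℝ)+1) * ((t:ℝ)+1) by positivity)]
  have hAM := amgm (r+1) ha hb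
  have hin : ((((r+1:ℕ)) : ℝ) * a + b) / (((r+1:ℕ):ℝ) + 1) = (t:ℝ) * n := by
    push_cast
    rw [ha', hb']
    field_simp
    ring
  rw [hin] at hAM
  -- hAM : a^(r+1) * b ≤ ((t:ℝ)*n)^(r+2)
  have hmul := mul_le_mul_of_nonneg_left hAM
    (show (0:ℝ) ≤ ((t:ℝ)+1) * (t.choose (r+1):ℝ) by positivity)
  -- multiply goal through by (r+2)
  rw [← mul_le_mul_iff_right₀ (show (0:ℝ) < (r:ℝ)+2 by positivity)]
  calc ((r:ℝ)+2) * (((t:ℝ)+1) ^ (r+2) * ((t.choose (r+2) : ℝ) * d ^ (r+2)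
          + (t:ℝ) * (n - d) * (t.choose (r+1) : ℝ) * d ^ (r+1)))
      = ((t:ℝ)+1) * (t.choose (r+1):ℝ) * (a ^ (r+1) * b) := by
        rw [ha', hb', mul_pow]
        linear_combination (((t:ℝ)+1) ^ (r+2) * d ^ (r+2)) * I1
    _ ≤ ((t:ℝ)+1) * (t.choose (r+1):ℝ) * (((t:ℝ) * n) ^ (r+2)) := hmul
    _ = ((r:ℝ)+2) * ((t:ℝ) ^ (r+2) * ((t+1).choose (r+2) : ℝ) * n ^ (r+2)) := by
        rw [mul_pow]
        linear_combination ((t:ℝ) ^ (r+2) * n ^ (r+2)) * I2.symm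

variable {V : Type*} [Fintype V]

/-- cliques of size `s` contained in `A`. -/
noncomputable def within (G : SimpleGraph V) (A : Finset V) (s : ℕ) : Finset (Finset V) :=
  @Finset.filter _ (fun S => G.IsNClique s S ∧ S ⊆ A) (Classical.decPred _) Finset.univ

lemma mem_within {G : SimpleGraph V} {A : Finset V} {s : ℕ} {S : Finset V} :
    S ∈ within G A s ↔ G.IsNClique s S ∧ S ⊆ A := by
  simp [within]

/-- cliques of size `s` contained in `A` containing `b`. -/
noncomputable def withMem (G : SimpleGraph V) (A : Finset V) (s : ℕ) (b : V) :
    Finset (Finset V) :=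
  @Finset.filter _ (fun S => b ∈ S) (Classical.decPred _) (within G A s)

lemma mem_withMem {G : SimpleGraph V} {A : Finset V} {s : ℕ} {b : V} {S : Finset V} :
    S ∈ withMem G A s b ↔ (G.IsNClique s S ∧ S ⊆ A) ∧ b ∈ S := by
  simp [withMem, mem_within]

/-- the part of `A` adjacent to `b`. -/
noncomputable def nbhd (G : SimpleGraph V) (A : Finset V) (b : V) : Finset V :=
  @Finset.filter _ (fun u => G.Adj b u) (Classical.decPred _) A

lemma mem_nbhd {G : SimpleGraph V} {A : Finset V} {b u : V} :
    u ∈ nbhd G A b ↔ u ∈ A ∧ G.Adj b u := by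
  simp [nbhd]

lemma nbhd_subset (G : SimpleGraph V) (A : Finset V) (b : V) : nbhd G A b ⊆ A :=
  fun u hu => (mem_nbhd.1 hu).1

lemma within_zero (G : SimpleGraph V) (A : Finset V) : within G A 0 = {∅} := by
  ext S
  rw [mem_within, Finset.mem_singleton, SimpleGraph.isNClique_zero]
  exact ⟨fun h => h.1, fun h => ⟨h, h ▸ Finset.empty_subset A⟩⟩

lemma within_one (G : SimpleGraph V) (A : Finset V) : (within G A 1).card = A.card := by
  classical
  have : within G A 1 = A.map ⟨fun v => {v}, fun _ _ => Finset.singleton_injective.eq_iff.1⟩ := by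
    ext S
    rw [mem_within, Finset.mem_map, SimpleGraph.isNClique_one]
    constructor
    · rintro ⟨⟨v, rfl⟩, hsub⟩
      exact ⟨v, hsub (Finset.mem_singleton_self v), rfl⟩
    · rintro ⟨v, hv, rfl⟩
      exact ⟨⟨v, rfl⟩, Finset.singleton_subset_iff.2 hv⟩
  rw [this, Finset.card_map]

lemma within_empty_of_lt {G : SimpleGraph V} {A : Finset V} {t s : ℕ}
    (hP : ∀ S, G.IsNClique (t+1) S → ¬ S ⊆ A) (h : t < s) : within G A s = ∅ := by
  rw [Finset.eq_empty_iff_forall_notMem]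
  intro S hS
  obtain ⟨hclq, hsub⟩ := mem_within.1 hS
  obtain ⟨T, hT, hTc⟩ := Finset.exists_subset_card_eq
    (show t+1 ≤ S.card by rw [hclq.card_eq]; omega)
  exact hP T ⟨hclq.1.subset hT, hTc⟩ (hT.trans hsub)

lemma within_of_empty (G : SimpleGraph V) (s : ℕ) : within G (∅ : Finset V) (s+1) = ∅ := by
  rw [Finset.eq_empty_iff_forall_notMem]
  intro S hS
  obtain ⟨hclq, hsub⟩ := mem_within.1 hS
  have hSe : S = ∅ := Finset.subset_empty.1 hsub
  rw [hSe] at hclq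
  simpa using hclq.card_eq

lemma withMem_card_le [DecidableEq V] (G : SimpleGraph V) (A : Finset V) (s : ℕ) (b : V) :
    (withMem G A (s+1) b).card ≤ (within G (nbhd G A b) s).card := by
  apply Finset.card_le_card_of_injOn (fun S => S.erase b)
  · intro S hS
    obtain ⟨⟨hclq, hsub⟩, hb⟩ := mem_withMem.1 hS
    refine mem_within.2 ⟨⟨hclq.1.subset (Finset.coe_subset.2 (Finset.erase_subset _ _)), ?_⟩, ?_⟩
    · rw [Finset.card_erase_of_mem hb, hclq.card_eq]
      omega
    · intro u hu
      obtain ⟨hub, huS⟩ := Finset.mem_erase.1 hu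
      exact mem_nbhd.2 ⟨hsub huS, hclq.1 hb huS (Ne.symm hub)⟩
  · intro S₁ h₁ S₂ h₂ he
    have hb₁ := (mem_withMem.1 (Finset.mem_coe.1 h₁)).2
    have hb₂ := (mem_withMem.1 (Finset.mem_coe.1 h₂)).2
    have he' : S₁.erase b = S₂.erase b := he
    rw [← Finset.insert_erase hb₁, he', Finset.insert_erase hb₂]

lemma within_split [DecidableEq V] (G : SimpleGraph V) {A A' : Finset V} (hA' : A' ⊆ A) (s : ℕ) :
    (within G A s).card ≤ (within G A' s).card
      + ∑ b ∈ A \ A', (withMem G A s b).card := by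
  have hsub : within G A s ⊆ (within G A' s) ∪ (A \ A').biUnion (fun b => withMem G A s b) := by
    intro S hS
    obtain ⟨hclq, hsubA⟩ := mem_within.1 hS
    by_cases h : S ⊆ A'
    · exact Finset.mem_union_left _ (mem_within.2 ⟨hclq, h⟩)
    · obtain ⟨b, hbS, hbA'⟩ := Finset.not_subset.1 h
      exact Finset.mem_union_right _ (Finset.mem_biUnion.2
        ⟨b, Finset.mem_sdiff.2 ⟨hsubA hbS, hbA'⟩, mem_withMem.2 ⟨⟨hclq, hsubA⟩, hbS⟩⟩)
  calc (within G A s).card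
      ≤ ((within G A' s) ∪ (A \ A').biUnion (fun b => withMem G A s b)).card :=
        Finset.card_le_card hsub
    _ ≤ (within G A' s).card + ((A \ A').biUnion (fun b => withMem G A s b)).card :=
        Finset.card_union_le _ _
    _ ≤ _ := Nat.add_le_add_left Finset.card_biUnion_le _

lemma hP_inter [DecidableEq V] {G : SimpleGraph V} {A : Finset V} {t : ℕ}
    (hP : ∀ S, G.IsNClique (t+1+1) S → ¬ S ⊆ A) {b : V} (hb : b ∈ A) :
    ∀ S, G.IsNClique (t+1) S → ¬ S ⊆ nbhd G A b := by
  intro S hS hsub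
  have hadj : ∀ u ∈ S, G.Adj b u := fun u hu => (mem_nbhd.1 (hsub hu)).2
  have hbS : b ∉ S := fun h => G.irrefl (hadj b h)
  refine hP (insert b S) ⟨?_, ?_⟩ ?_
  · have hclq : G.IsClique (insert b (S : Set V)) :=
      hS.1.insert (fun u hu _ => hadj u hu)
    rw [Finset.coe_insert]
    exact hclq
  · rw [Finset.card_insert_of_notMem hbS, hS.card_eq]
  · intro x hx
    rcases Finset.mem_insert.1 hx with rfl | hx'
    · exact hb
    · exact (nbhd_subset G A b) (hsub hx')

lemma aux [DecidableEq V] (G : SimpleGraph V) : ∀ (t : ℕ) (A : Finset V) (s : ℕ),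
    (∀ S, G.IsNClique (t+1) S → ¬ S ⊆ A) →
    (t:ℝ)^s * ((within G A s).card : ℝ) ≤ (t.choose s : ℝ) * (A.card : ℝ)^s := by
  intro t
  induction t with
  | zero =>
    intro A s hP
    cases s with
    | zero => simp [within_zero]
    | succ s =>
      rw [within_empty_of_lt hP (Nat.succ_pos s)]
      simp
  | succ t ih =>
    intro A s hP
    match s with
    | 0 => simp [within_zero]
    | 1 =>
      rw [within_one]
      simp
    | (r+2) =>
      by_cases hst : r + 2 ≤ t + 1
      case neg =>
        rw [within_empty_of_lt hP (by omega)]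
        simp
        positivity
      case pos =>
      rcases A.eq_empty_or_nonempty with rfl | hA
      · rw [within_of_empty]
        simp
      obtain ⟨v, hvA, hvmax⟩ := Finset.exists_max_image A
        (fun u => (nbhd G A u).card) hA
      set A' := nbhd G A v with hA'def
      have hA'A : A' ⊆ A := nbhd_subset G A v
      have hdn : A'.card ≤ A.card := Finset.card_le_card hA'A
      have hrt : r + 1 ≤ t := by omega
      have hP' : ∀ S, G.IsNClique (t+1) S → ¬ S ⊆ A' := hP_inter hP hvA
      -- induction hypothesis on A'
      have h1 := ih A' (r+2) hP'
      -- per-vertex bound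
      have h2 : ∀ b ∈ A \ A', ((t:ℝ))^(r+1) * ((withMem G A (r+2) b).card : ℝ)
          ≤ (t.choose (r+1) : ℝ) * (A'.card : ℝ)^(r+1) := by
        intro b hb
        have hbA : b ∈ A := (Finset.mem_sdiff.1 hb).1
        have hble : (nbhd G A b).card ≤ A'.card := hvmax b hbA
        have hIH := ih (nbhd G A b) (r+1) (hP_inter hP hbA)
        calc ((t:ℝ))^(r+1) * ((withMem G A (r+2) b).card : ℝ)
            ≤ ((t:ℝ))^(r+1) * ((within G (nbhd G A b) (r+1)).card : ℝ) := by
              refine mul_le_mul_of_nonneg_left ?_ (by positivity)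
              exact_mod_cast withMem_card_le G A (r+1) b
          _ ≤ (t.choose (r+1) : ℝ) * ((nbhd G A b).card : ℝ)^(r+1) := hIH
          _ ≤ (t.choose (r+1) : ℝ) * (A'.card : ℝ)^(r+1) := by
              refine mul_le_mul_of_nonneg_left ?_ (by positivity)
              refine pow_le_pow_left₀ (by positivity) ?_ _
              exact_mod_cast hble
      -- split
      have h3 : ((within G A (r+2)).card : ℝ) ≤ ((within G A' (r+2)).card : ℝ)
          + ∑ b ∈ A \ A', ((withMem G A (r+2) b).card : ℝ) := by
        exact_mod_cast within_split G hA'A (r+2)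
      have hcard : ((A \ A').card : ℝ) = (A.card : ℝ) - (A'.card : ℝ) := by
        rw [Finset.card_sdiff_of_subset hA'A, Nat.cast_sub hdn]
      set d : ℝ := (A'.card : ℝ) with hd'
      set n : ℝ := (A.card : ℝ) with hn'
      have hd0 : 0 ≤ d := by positivity
      have hdn' : d ≤ n := by rw [hd', hn']; exact_mod_cast hdn
      -- sum bound
      have hsum : (t:ℝ)^(r+1) * ∑ b ∈ A \ A', ((withMem G A (r+2) b).card : ℝ)
          ≤ (n - d) * ((t.choose (r+1) : ℝ) * d^(r+1)) := by
        rw [Finset.mul_sum]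
        calc ∑ b ∈ A \ A', (t:ℝ)^(r+1) * ((withMem G A (r+2) b).card : ℝ)
            ≤ ∑ _b ∈ A \ A', (t.choose (r+1) : ℝ) * d^(r+1) := Finset.sum_le_sum h2
          _ = ((A \ A').card : ℝ) * ((t.choose (r+1) : ℝ) * d^(r+1)) := by
              rw [Finset.sum_const, nsmul_eq_mul]
          _ = (n - d) * ((t.choose (r+1) : ℝ) * d^(r+1)) := by rw [hcard]
      -- combine
      have H : (t:ℝ)^(r+2) * ((within G A (r+2)).card : ℝ)
          ≤ (t.choose (r+2) : ℝ) * d^(r+2) + (t:ℝ) * (n - d) * (t.choose (r+1) : ℝ) * d^(r+1) := by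
        calc (t:ℝ)^(r+2) * ((within G A (r+2)).card : ℝ)
            ≤ (t:ℝ)^(r+2) * (((within G A' (r+2)).card : ℝ)
                + ∑ b ∈ A \ A', ((withMem G A (r+2) b).card : ℝ)) :=
              mul_le_mul_of_nonneg_left h3 (by positivity)
          _ = (t:ℝ)^(r+2) * ((within G A' (r+2)).card : ℝ)
                + (t:ℝ) * ((t:ℝ)^(r+1) * ∑ b ∈ A \ A', ((withMem G A (r+2) b).card : ℝ)) := by
              ring
          _ ≤ (t.choose (r+2) : ℝ) * d^(r+2)
                + (t:ℝ) * ((n - d) * ((t.choose (r+1) : ℝ) * d^(r+1))) :=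
              add_le_add h1 (mul_le_mul_of_nonneg_left hsum (by positivity))
          _ = (t.choose (r+2) : ℝ) * d^(r+2)
                + (t:ℝ) * (n - d) * (t.choose (r+1) : ℝ) * d^(r+1) := by ring
      have hkey := key t r hrt hd0 hdn'
      have htpos : (0:ℝ) < (t:ℝ)^(r+2) := by
        have h1t : (1:ℕ) ≤ t := by omega
        have h1t' : (1:ℝ) ≤ (t:ℝ) := by exact_mod_cast h1t
        positivity
      rw [← mul_le_mul_iff_left₀ htpos]
      push_cast
      calc ((t:ℝ)+1)^(r+2) * ((within G A (r+2)).card : ℝ) * (t:ℝ)^(r+2)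
          = ((t:ℝ)+1)^(r+2) * ((t:ℝ)^(r+2) * ((within G A (r+2)).card : ℝ)) := by ring
        _ ≤ ((t:ℝ)+1)^(r+2) * ((t.choose (r+2) : ℝ) * d^(r+2)
              + (t:ℝ) * (n - d) * (t.choose (r+1) : ℝ) * d^(r+1)) :=
            mul_le_mul_of_nonneg_left H (by positivity)
        _ ≤ (t:ℝ)^(r+2) * ((t+1).choose (r+2) : ℝ) * n^(r+2) := hkey
        _ = ((t+1).choose (r+2) : ℝ) * n^(r+2) * (t:ℝ)^(r+2) := by ring

end ZykovAux

/-- The number of cliques of cardinality `ℓ` in a graph. -/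
noncomputable def cliqueCountOf {V : Type*} (G : SimpleGraph V) (ℓ : ℕ) : ℕ :=
  Nat.card {s : Finset V // G.IsNClique ℓ s}

/-- Every graph with `n ≥ ℓ` vertices and no clique of cardinality `k + 1`
(where `k ≥ 1`, `0 ≤ ℓ ≤ k`) has at most `C(k,ℓ)·(n/k)^ℓ` cliques of
cardinality `ℓ`. -/
theorem zykov {V : Type*} [Fintype V] (G : SimpleGraph V) (k ℓ : ℕ)
    (hk : 1 ≤ k) (hℓ : ℓ ≤ k) (hn : ℓ ≤ Fintype.card V)
    (hfree : G.CliqueFree (k + 1)) :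
    k ^ ℓ * cliqueCountOf G ℓ ≤ k.choose ℓ * Fintype.card V ^ ℓ := by
  classical
  have hcount : cliqueCountOf G ℓ = (ZykovAux.within G Finset.univ ℓ).card := by
    rw [cliqueCountOf, Nat.card_eq_fintype_card, Fintype.card_subtype]
    congr 1
    ext S
    simp [ZykovAux.within, Finset.mem_filter]
  have hP : ∀ S, G.IsNClique (k+1) S → ¬ S ⊆ Finset.univ := fun S h _ => hfree S h
  have haux := ZykovAux.aux G k Finset.univ ℓ hP
  rw [Finset.card_univ] at haux
  rw [hcount]
  exact_mod_cast haux
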